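/- Let p ≡ 1 (mod 3) be a prime, θ, q ∈ ℚ_p with 0 < |θ−1|_p < |q|_p < 1, f the Potts–Bethe mapping f(x) = ((θx+q−1)/(x+θ+q−2))³, and x∞ = 2−θ−q. Let x1 be a fixed point with |x1 − x∞|_p = |θ−1|_p (i.e. x1 = x∞ + (θ−1)y1 with |y1|_p = 1). Then for all u, v in the ball C₁ = {x : |x − x1|_p < |θ−1|_p}, one has |f(u) − f(v)|_p = (|q|_p/|θ−1|_p)·|u − v|_p. -/

import Mathlib

/-- For `p ≡ 1 (mod 3)`, on the ball `C₁ = {x : ‖x - x₁‖ < ‖θ-1‖}` around the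
repelling fixed point `x₁ = x∞ + (θ-1)y₁` (with `‖y₁‖ = 1`), the Potts–Bethe
mapping is a local scaling with factor `‖q‖/‖θ-1‖`. -/
theorem pottsBethe_scaling_on_C1 (p : ℕ) [Fact p.Prime] (hp : p % 3 = 1)
    (θ q : ℚ_[p]) (h1 : 0 < ‖θ - 1‖) (h2 : ‖θ - 1‖ < ‖q‖) (h3 : ‖q‖ < 1)
    (y1 x1 : ℚ_[p]) (hy1 : ‖y1‖ = 1) (hx1 : x1 = (2 - θ - q) + (θ - 1) * y1)
    (hfix : ((θ * x1 + q - 1) / (x1 + θ + q - 2)) ^ 3 = x1) :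
    ∀ u v : ℚ_[p], ‖u - x1‖ < ‖θ - 1‖ → ‖v - x1‖ < ‖θ - 1‖ →
      ‖((θ * u + q - 1) / (u + θ + q - 2)) ^ 3
          - ((θ * v + q - 1) / (v + θ + q - 2)) ^ 3‖
        = ‖q‖ / ‖θ - 1‖ * ‖u - v‖ := by
  intro u v hu hv
  set s : ℚ_[p] := θ - 1 with hs
  set X : ℚ_[p] := 2 - θ - q with hX
  -- basic norms
  have hs1 : ‖s‖ < 1 := lt_trans h2 h3
  have hθ : ‖θ‖ = 1 := by
    have hrw : θ = s + 1 := by rw [hs]; ring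
    rw [hrw, Padic.add_eq_max_of_ne (by rw [norm_one]; exact ne_of_lt hs1), norm_one,
      max_eq_right (le_of_lt hs1)]
  have hq1 : ‖θ + q - 1‖ = ‖q‖ := by
    have : θ + q - 1 = s + q := by rw [hs]; ring
    rw [this, Padic.add_eq_max_of_ne (ne_of_lt h2), max_eq_right (le_of_lt h2)]
  -- norm of w - X on the ball
  have key : ∀ w : ℚ_[p], ‖w - x1‖ < ‖s‖ → ‖w - X‖ = ‖s‖ := by
    intro w hw
    have hrw : w - X = (w - x1) + s * y1 := by rw [hx1]; ring
    have hsy : ‖s * y1‖ = ‖s‖ := by rw [norm_mul, hy1, mul_one]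
    rw [hrw, Padic.add_eq_max_of_ne (by rw [hsy]; exact ne_of_lt hw), hsy,
      max_eq_right (le_of_lt hw)]
  have huX : ‖u - X‖ = ‖s‖ := key u hu
  have hvX : ‖v - X‖ = ‖s‖ := key v hv
  have hs0 : s ≠ 0 := by
    intro h; rw [h, norm_zero] at h1; exact lt_irrefl 0 h1
  have hu0 : u - X ≠ 0 := by
    intro h; rw [h, norm_zero] at huX; exact hs0 (norm_eq_zero.mp huX.symm)
  have hv0 : v - X ≠ 0 := by
    intro h; rw [h, norm_zero] at hvX; exact hs0 (norm_eq_zero.mp hvX.symm)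
  -- rewrite denominators
  have hud : u + θ + q - 2 = u - X := by rw [hX]; ring
  have hvd : v + θ + q - 2 = v - X := by rw [hX]; ring
  rw [hud, hvd]
  set c : ℚ_[p] := -(s * (θ + q - 1)) with hc
  have hcX : c = θ * X + q - 1 := by rw [hc, hX, hs]; ring
  have hcn : ‖c‖ = ‖s‖ * ‖q‖ := by rw [hc, norm_neg, norm_mul, hq1]
  set gu : ℚ_[p] := (θ * u + q - 1) / (u - X) with hgu
  set gv : ℚ_[p] := (θ * v + q - 1) / (v - X) with hgv
  set eu : ℚ_[p] := c / (u - X) with heu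
  set ev : ℚ_[p] := c / (v - X) with hev
  have hgue : gu = θ + eu := by
    rw [hgu, heu, hcX]; field_simp; ring
  have hgve : gv = θ + ev := by
    rw [hgv, hev, hcX]; field_simp; ring
  have heun : ‖eu‖ = ‖q‖ := by
    rw [heu, norm_div, hcn, huX, mul_div_assoc]
    rw [mul_comm]
    exact div_mul_cancel₀ _ (ne_of_gt h1)
  have hevn : ‖ev‖ = ‖q‖ := by
    rw [hev, norm_div, hcn, hvX, mul_div_assoc]
    rw [mul_comm]
    exact div_mul_cancel₀ _ (ne_of_gt h1)
  -- difference of g's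
  have hdiff : gu - gv = c * (v - u) / ((u - X) * (v - X)) := by
    rw [hgue, hgve, heu, hev]
    field_simp
    ring
  have hdiffn : ‖gu - gv‖ = ‖q‖ / ‖s‖ * ‖u - v‖ := by
    rw [hdiff, norm_div, norm_mul, norm_mul, huX, hvX, hcn, norm_sub_rev v u]
    field_simp
  -- the quadratic factor
  set S : ℚ_[p] := gu ^ 2 + gu * gv + gv ^ 2 with hS
  have h3n : ‖(3 : ℚ_[p])‖ = 1 := by
    have hle : ‖((3 : ℤ) : ℚ_[p])‖ ≤ 1 := Padic.norm_int_le_one 3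
    have hnlt : ¬ ‖((3 : ℤ) : ℚ_[p])‖ < 1 := by
      rw [Padic.norm_intCast_lt_one_iff]
      intro hdvd
      have hnd : p ∣ 3 := by exact_mod_cast hdvd
      rcases (Nat.prime_three).eq_one_or_self_of_dvd p hnd with h | h
      · exact (Fact.out : p.Prime).one_lt.ne' h
      · rw [h] at hp; omega
    have : ‖((3 : ℤ) : ℚ_[p])‖ = 1 := le_antisymm hle (not_lt.mp hnlt)
    simpa using this
  have hE : S = 3 * θ ^ 2 + (3 * θ * eu + (3 * θ * ev + (eu ^ 2 + (eu * ev + ev ^ 2)))) := by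
    rw [hS, hgue, hgve]; ring
  have hq0 : (0 : ℝ) ≤ ‖q‖ := norm_nonneg _
  have hEn : ‖3 * θ * eu + (3 * θ * ev + (eu ^ 2 + (eu * ev + ev ^ 2)))‖ ≤ ‖q‖ := by
    have b1 : ‖3 * θ * eu‖ ≤ ‖q‖ := by
      rw [norm_mul, norm_mul, h3n, hθ, heun]; simp
    have b2 : ‖3 * θ * ev‖ ≤ ‖q‖ := by
      rw [norm_mul, norm_mul, h3n, hθ, hevn]; simp
    have b3 : ‖eu ^ 2‖ ≤ ‖q‖ := by
      rw [norm_pow, heun, sq]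
      exact mul_le_of_le_one_left hq0 h3.le
    have b4 : ‖eu * ev‖ ≤ ‖q‖ := by
      rw [norm_mul, heun, hevn]
      exact mul_le_of_le_one_left hq0 h3.le
    have b5 : ‖ev ^ 2‖ ≤ ‖q‖ := by
      rw [norm_pow, hevn, sq]
      exact mul_le_of_le_one_left hq0 h3.le
    calc ‖3 * θ * eu + (3 * θ * ev + (eu ^ 2 + (eu * ev + ev ^ 2)))‖
        ≤ max ‖3 * θ * eu‖ ‖3 * θ * ev + (eu ^ 2 + (eu * ev + ev ^ 2))‖ :=
          Padic.nonarchimedean _ _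
      _ ≤ ‖q‖ := by
          apply max_le b1
          calc ‖3 * θ * ev + (eu ^ 2 + (eu * ev + ev ^ 2))‖
              ≤ max ‖3 * θ * ev‖ ‖eu ^ 2 + (eu * ev + ev ^ 2)‖ :=
                Padic.nonarchimedean _ _
            _ ≤ ‖q‖ := by
                apply max_le b2
                calc ‖eu ^ 2 + (eu * ev + ev ^ 2)‖
                    ≤ max ‖eu ^ 2‖ ‖eu * ev + ev ^ 2‖ := Padic.nonarchimedean _ _
                  _ ≤ ‖q‖ := by
                      apply max_le b3
                      calc ‖eu * ev + ev ^ 2‖ ≤ max ‖eu * ev‖ ‖ev ^ 2‖ :=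
                            Padic.nonarchimedean _ _
                        _ ≤ ‖q‖ := max_le b4 b5
  have h3θ : ‖3 * θ ^ 2‖ = 1 := by rw [norm_mul, norm_pow, h3n, hθ]; norm_num
  have hSn : ‖S‖ = 1 := by
    rw [hE, Padic.add_eq_max_of_ne (by rw [h3θ]; exact (ne_of_lt (lt_of_le_of_lt hEn h3)).symm),
      h3θ, max_eq_left (le_of_lt (lt_of_le_of_lt hEn h3))]
  -- put everything together
  have hcube : gu ^ 3 - gv ^ 3 = (gu - gv) * S := by rw [hS]; ring
  rw [hcube, norm_mul, hSn, mul_one, hdiffn]
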